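/- arXiv:1912.01945 — 2 statements merged into one kernel-verified Lean document; each statement's English description precedes it below -/
import Mathlib

section
/- Let (X, μ) be a finite measure space, let g : ℝ → ℝ be continuous, nondecreasing, and satisfy s·g(s) ≥ 0 for all s ∈ ℝ, and let u : X → ℝ be measurable. For N ∈ ℕ let u_N := max(−N, min(N, u)) denote the truncation of u at level N. Let K ≥ 0 and assume that for every N ∈ ℕ the product g(u)·g(u_N) is μ-integrable and ∫_X g(u) g(u_N) dμ ≤ K (∫_X g(u_N)² dμ)^{1/2}. Then g(u) ∈ L²(μ) and ‖g(u)‖_{L²(μ)} ≤ K. -/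
open MeasureTheory Filter
open scoped ENNReal NNReal

/-- An `L²` bound for `g(u)` obtained from uniform bounds against truncations: if `g` is
continuous, nondecreasing, with `s·g(s) ≥ 0`, and for every truncation level `N` the
product `g(u)·g(u_N)` is integrable with
`∫ g(u) g(u_N) dμ ≤ K (∫ g(u_N)² dμ)^{1/2}` where `u_N = max(−N, min(N, u))`,
then `g(u) ∈ L²(μ)` and `‖g(u)‖_{L²(μ)} ≤ K`. -/
theorem stmt12 {X : Type*} [MeasurableSpace X] (μ : Measure X) [IsFiniteMeasure μ]
    (g : ℝ → ℝ) (hgc : Continuous g) (hgm : Monotone g) (hgs : ∀ s : ℝ, 0 ≤ s * g s)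
    (u : X → ℝ) (hu : Measurable u) (K : ℝ) (hK : 0 ≤ K)
    (hint : ∀ N : ℕ, Integrable
      (fun x => g (u x) * g (max (-(N : ℝ)) (min (N : ℝ) (u x)))) μ)
    (hbd : ∀ N : ℕ,
      ∫ x, g (u x) * g (max (-(N : ℝ)) (min (N : ℝ) (u x))) ∂μ ≤
        K * Real.sqrt (∫ x, (g (max (-(N : ℝ)) (min (N : ℝ) (u x)))) ^ 2 ∂μ)) :
    MemLp (fun x => g (u x)) 2 μ ∧
      eLpNorm (fun x => g (u x)) 2 μ ≤ ENNReal.ofReal K := by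
  have hpos : ∀ s : ℝ, 0 < s → 0 ≤ g s := fun s hs => by nlinarith [hgs s]
  have hneg : ∀ s : ℝ, s < 0 → g s ≤ 0 := fun s hs => by nlinarith [hgs s]
  have hg0 : g 0 = 0 := by
    have h1 : Filter.Tendsto (fun n : ℕ => g (1 / (n + 1))) atTop (nhds (g 0)) := by
      have h := tendsto_one_div_add_atTop_nhds_zero_nat (𝕜 := ℝ)
      exact (hgc.tendsto 0).comp h
    have h2 : Filter.Tendsto (fun n : ℕ => g (-(1 / (n + 1)))) atTop (nhds (g 0)) := by
      have h := (tendsto_one_div_add_atTop_nhds_zero_nat (𝕜 := ℝ)).neg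
      rw [neg_zero] at h
      exact (hgc.tendsto 0).comp h
    have hge : 0 ≤ g 0 := ge_of_tendsto h1 (Eventually.of_forall fun n => hpos _ (by positivity))
    have hle : g 0 ≤ 0 := le_of_tendsto h2 (Eventually.of_forall fun n => hneg _ (by
      have : (0:ℝ) < 1 / (n + 1) := by positivity
      linarith))
    linarith
  have key : ∀ (N : ℕ) (a : ℝ),
      (g (max (-(N : ℝ)) (min (N : ℝ) a))) ^ 2 ≤ g a * g (max (-(N : ℝ)) (min (N : ℝ) a)) := by
    intro N a
    set c := max (-(N : ℝ)) (min (N : ℝ) a) with hc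
    have hN : (0 : ℝ) ≤ N := N.cast_nonneg
    rcases le_or_gt 0 a with ha | ha
    · have hc0 : 0 ≤ c := le_max_of_le_right (le_min hN ha)
      have hca : c ≤ a := max_le (by linarith) (min_le_right _ _)
      have h1 : 0 ≤ g c := hg0 ▸ hgm hc0
      have h2 : g c ≤ g a := hgm hca
      nlinarith
    · have hc0 : c ≤ 0 := max_le (by linarith) (le_trans (min_le_right _ _) ha.le)
      have hca : a ≤ c := le_max_of_le_right (le_min (ha.le.trans hN) le_rfl)
      have h1 : g c ≤ 0 := hg0 ▸ hgm hc0
      have h2 : g a ≤ g c := hgm hca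
      nlinarith
  have hmeas : ∀ N : ℕ, Measurable (fun x => g (max (-(N : ℝ)) (min (N : ℝ) (u x)))) :=
    fun N => hgc.measurable.comp (measurable_const.max (measurable_const.min hu))
  have hintsq : ∀ N : ℕ,
      Integrable (fun x => (g (max (-(N : ℝ)) (min (N : ℝ) (u x)))) ^ 2) μ := by
    intro N
    refine (integrable_const ((max |g (-(N : ℝ))| |g (N : ℝ)|) ^ 2)).mono'
      ((hmeas N).pow_const 2).aestronglyMeasurable (Eventually.of_forall fun x => ?_)
    set c := max (-(N : ℝ)) (min (N : ℝ) (u x)) with hcdef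
    have h1 : -(N : ℝ) ≤ c := le_max_left _ _
    have h2 : c ≤ (N : ℝ) := max_le (by have : (0:ℝ) ≤ N := N.cast_nonneg; linarith) (min_le_left _ _)
    have hb : |g c| ≤ max |g (-(N : ℝ))| |g (N : ℝ)| := by
      rw [abs_le]
      constructor
      · calc -(max |g (-(N : ℝ))| |g (N : ℝ)|) ≤ -|g (-(N : ℝ))| := by
              simp [le_max_left]
          _ ≤ g (-(N : ℝ)) := neg_abs_le _
          _ ≤ g c := hgm h1
      · calc g c ≤ g (N : ℝ) := hgm h2
          _ ≤ |g (N : ℝ)| := le_abs_self _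
          _ ≤ max |g (-(N : ℝ))| |g (N : ℝ)| := le_max_right _ _
    have : ‖(g c) ^ 2‖ = |g c| ^ 2 := by
      rw [Real.norm_eq_abs, abs_pow, sq_abs, ← sq_abs]
    rw [this]
    exact pow_le_pow_left₀ (abs_nonneg _) hb 2
  have hI : ∀ N : ℕ, ∫ x, (g (max (-(N : ℝ)) (min (N : ℝ) (u x)))) ^ 2 ∂μ ≤ K ^ 2 := by
    intro N
    set I := ∫ x, (g (max (-(N : ℝ)) (min (N : ℝ) (u x)))) ^ 2 ∂μ with hIdef
    have hI0 : 0 ≤ I := integral_nonneg fun x => sq_nonneg _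
    have h1 : I ≤ ∫ x, g (u x) * g (max (-(N : ℝ)) (min (N : ℝ) (u x))) ∂μ :=
      integral_mono (hintsq N) (hint N) fun x => key N (u x)
    have h2 := hbd N
    nlinarith [Real.sq_sqrt hI0, Real.sqrt_nonneg I]
  have hL : ∀ N : ℕ,
      ∫⁻ x, ENNReal.ofReal ((g (max (-(N : ℝ)) (min (N : ℝ) (u x)))) ^ 2) ∂μ ≤
        ENNReal.ofReal (K ^ 2) := by
    intro N
    rw [← ofReal_integral_eq_lintegral_ofReal (hintsq N)
      (Eventually.of_forall fun x => sq_nonneg _)]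
    exact ENNReal.ofReal_le_ofReal (hI N)
  have hconv : ∀ x : X,
      Filter.Tendsto (fun N : ℕ => ENNReal.ofReal ((g (max (-(N : ℝ)) (min (N : ℝ) (u x)))) ^ 2))
        atTop (nhds (ENNReal.ofReal ((g (u x)) ^ 2))) := by
    intro x
    apply tendsto_atTop_of_eventually_const (i₀ := ⌈|u x|⌉₊)
    intro N hN
    have hNx : |u x| ≤ (N : ℝ) := le_trans (Nat.le_ceil _) (by exact_mod_cast hN)
    have h1 : min (N : ℝ) (u x) = u x := min_eq_right (le_trans (le_abs_self _) hNx)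
    have h2 : max (-(N : ℝ)) (u x) = u x :=
      max_eq_right (by linarith [neg_abs_le (u x)])
    rw [h1, h2]
  have hmain : ∫⁻ x, ENNReal.ofReal ((g (u x)) ^ 2) ∂μ ≤ ENNReal.ofReal (K ^ 2) := by
    calc ∫⁻ x, ENNReal.ofReal ((g (u x)) ^ 2) ∂μ
        = ∫⁻ x, Filter.liminf
            (fun N : ℕ => ENNReal.ofReal ((g (max (-(N : ℝ)) (min (N : ℝ) (u x)))) ^ 2))
            atTop ∂μ := lintegral_congr fun x => ((hconv x).liminf_eq).symm
      _ ≤ Filter.liminf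
            (fun N : ℕ => ∫⁻ x, ENNReal.ofReal ((g (max (-(N : ℝ)) (min (N : ℝ) (u x)))) ^ 2) ∂μ)
            atTop := lintegral_liminf_le fun N =>
              ENNReal.measurable_ofReal.comp ((hmeas N).pow_const 2)
      _ ≤ ENNReal.ofReal (K ^ 2) := by
          refine le_trans (Filter.liminf_le_liminf (Eventually.of_forall hL)) ?_
          simp
  have hnorm : ∀ r : ℝ, ((‖r‖₊ : ℝ≥0∞)) ^ (2 : ℝ) = ENNReal.ofReal (r ^ 2) := by
    intro r
    have h1 : ((‖r‖₊ : ℝ≥0∞)) ^ (2 : ℝ) = ((‖r‖₊ : ℝ≥0∞)) ^ (2 : ℕ) := by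
      rw [← ENNReal.rpow_natCast]; norm_num
    rw [h1, show r ^ 2 = |r| ^ 2 from (sq_abs r).symm,
      ENNReal.ofReal_pow (abs_nonneg r)]
    congr 1
    exact Real.enorm_eq_ofReal_abs r
  have heLp : eLpNorm (fun x => g (u x)) 2 μ =
      (∫⁻ x, ENNReal.ofReal ((g (u x)) ^ 2) ∂μ) ^ (1 / 2 : ℝ) := by
    rw [eLpNorm_eq_lintegral_rpow_enorm_toReal (by norm_num) (by norm_num)]
    norm_num
    congr 1
    refine lintegral_congr fun x => ?_
    rw [← hnorm (g (u x)), ← ENNReal.rpow_natCast]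
    norm_num
    rfl
  have hfinal : eLpNorm (fun x => g (u x)) 2 μ ≤ ENNReal.ofReal K := by
    rw [heLp]
    calc (∫⁻ x, ENNReal.ofReal ((g (u x)) ^ 2) ∂μ) ^ (1 / 2 : ℝ)
        ≤ (ENNReal.ofReal (K ^ 2)) ^ (1 / 2 : ℝ) :=
          ENNReal.rpow_le_rpow hmain (by norm_num)
      _ = ENNReal.ofReal K := by
          rw [ENNReal.ofReal_pow hK, ← ENNReal.rpow_natCast (ENNReal.ofReal K) 2,
            ← ENNReal.rpow_mul]
          norm_num
  refine ⟨⟨(hgc.measurable.comp hu).aestronglyMeasurable, ?_⟩, hfinal⟩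
  exact lt_of_le_of_lt hfinal ENNReal.ofReal_lt_top
end

section
/- Let H be a real Hilbert space, let B : H → H be a continuous linear map that is self-adjoint (⟨B v, w⟩ = ⟨v, B w⟩ for all v, w) and positive semidefinite (⟨B v, v⟩ ≥ 0 for all v). Let f : ℝ → H be strongly measurable with t ↦ ‖f(t)‖² locally integrable, and let h > 0 and s > 0. Then ∫₀^s ⟨B f(t), f(t) − f(t−h)⟩ dt ≥ ½ ∫_{s−h}^{s} ⟨B f(t), f(t)⟩ dt − ½ ∫_{−h}^{0} ⟨B f(t), f(t)⟩ dt. -/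
open MeasureTheory

/-- The telescoping inequality for difference quotients: for a self-adjoint positive
semidefinite continuous linear map `B` on a real Hilbert space and `f : ℝ → H` strongly
measurable with `‖f‖²` locally integrable, for all `h > 0`, `s > 0`,
`∫₀^s ⟨B f(t), f(t) − f(t−h)⟩ dt ≥ ½ ∫_{s−h}^s ⟨B f, f⟩ dt − ½ ∫_{−h}^0 ⟨B f, f⟩ dt`. -/
theorem stmt13 {H : Type*} [NormedAddCommGroup H] [InnerProductSpace ℝ H]
    [CompleteSpace H]
    (B : H →L[ℝ] H)
    (hsa : ∀ x y : H, (inner ℝ (B x) y : ℝ) = (inner ℝ x (B y) : ℝ))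
    (hpos : ∀ x : H, 0 ≤ (inner ℝ (B x) x : ℝ))
    (f : ℝ → H) (hf : StronglyMeasurable f)
    (hloc : LocallyIntegrable (fun t : ℝ => ‖f t‖ ^ 2) volume)
    (h s : ℝ) (hh : 0 < h) (hs : 0 < s) :
    (1 / 2 : ℝ) * (∫ t in (s - h)..s, (inner ℝ (B (f t)) (f t) : ℝ)) -
        (1 / 2 : ℝ) * (∫ t in (-h)..(0 : ℝ), (inner ℝ (B (f t)) (f t) : ℝ)) ≤
      ∫ t in (0 : ℝ)..s, (inner ℝ (B (f t)) (f t - f (t - h)) : ℝ) := by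
  set g : ℝ → ℝ := fun t => (inner ℝ (B (f t)) (f t) : ℝ) with hg
  -- measurability of g
  have hgm : StronglyMeasurable g := by
    apply Continuous.comp_stronglyMeasurable (g := fun x : H => (inner ℝ (B x) x : ℝ)) ?_ hf
    exact (B.continuous.inner continuous_id)
  -- norm-squared is interval integrable everywhere
  have hnsq : ∀ a b : ℝ, IntervalIntegrable (fun t => ‖f t‖ ^ 2) volume a b := by
    intro a b
    exact (hloc.integrableOn_isCompact isCompact_uIcc).intervalIntegrable
  -- g is interval integrable everywhere
  have hgi : ∀ a b : ℝ, IntervalIntegrable g volume a b := by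
    intro a b
    apply ((hnsq a b).smul ‖B‖).mono_fun hgm.aestronglyMeasurable.restrict
    filter_upwards with t
    simp only [hg, smul_eq_mul]
    calc ‖(inner ℝ (B (f t)) (f t) : ℝ)‖ ≤ ‖B (f t)‖ * ‖f t‖ := norm_inner_le_norm _ _
      _ ≤ ‖B‖ * ‖f t‖ * ‖f t‖ := by
          have := B.le_opNorm (f t)
          nlinarith [norm_nonneg (f t)]
      _ = ‖B‖ * ‖f t‖ ^ 2 := by ring
      _ ≤ ‖‖B‖ * ‖f t‖ ^ 2‖ := le_abs_self _
  have hgsh : ∀ a b : ℝ, IntervalIntegrable (fun t => g (t - h)) volume a b := by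
    intro a b
    have := (hgi (a - h) (b - h)).comp_sub_right h
    have e1 : a - h + h = a := by ring
    have e2 : b - h + h = b := by ring
    rw [e1, e2] at this
    exact this
  -- interval integrability of the integrand
  have hFi : IntervalIntegrable (fun t => (inner ℝ (B (f t)) (f t - f (t - h)) : ℝ))
      volume 0 s := by
    have hFm : StronglyMeasurable (fun t => (inner ℝ (B (f t)) (f t - f (t - h)) : ℝ)) := by
      have hc : Continuous (fun p : H × H => (inner ℝ (B p.1) (p.1 - p.2) : ℝ)) := by
        exact Continuous.inner (B.continuous.comp continuous_fst)
          (continuous_fst.sub continuous_snd)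
      have hm : StronglyMeasurable (fun t => (f t, f (t - h))) :=
        hf.prodMk (hf.comp_measurable (measurable_id.sub_const h))
      exact hc.comp_stronglyMeasurable hm
    have hsq2 : IntervalIntegrable (fun t => ‖f (t - h)‖ ^ 2) volume 0 s := by
      have := (hnsq (0 - h) (s - h)).comp_sub_right h
      have e1 : (0:ℝ) - h + h = 0 := by ring
      have e2 : s - h + h = s := by ring
      rw [e1, e2] at this
      exact this
    apply (((hnsq 0 s).smul (2 * ‖B‖)).add (hsq2.smul ‖B‖)).mono_fun
      hFm.aestronglyMeasurable.restrict
    · filter_upwards with t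
      simp only [Pi.add_apply, Pi.smul_apply, smul_eq_mul]
      have h1 : ‖(inner ℝ (B (f t)) (f t - f (t - h)) : ℝ)‖ ≤ ‖B (f t)‖ * ‖f t - f (t - h)‖ :=
        norm_inner_le_norm _ _
      have h2 : ‖B (f t)‖ ≤ ‖B‖ * ‖f t‖ := B.le_opNorm _
      have h3 : ‖f t - f (t - h)‖ ≤ ‖f t‖ + ‖f (t - h)‖ := norm_sub_le _ _
      have hB : 0 ≤ ‖B‖ := norm_nonneg _
      have := norm_nonneg (f t); have := norm_nonneg (f (t - h))
      have key : ‖(inner ℝ (B (f t)) (f t - f (t - h)) : ℝ)‖ ≤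
          2 * ‖B‖ * ‖f t‖ ^ 2 + ‖B‖ * ‖f (t - h)‖ ^ 2 := by
        have h4 : ‖B (f t)‖ * ‖f t - f (t - h)‖ ≤
            (‖B‖ * ‖f t‖) * (‖f t‖ + ‖f (t - h)‖) :=
          mul_le_mul h2 h3 (norm_nonneg _) (mul_nonneg hB (norm_nonneg _))
        nlinarith [mul_nonneg hB (sq_nonneg (‖f t‖ - ‖f (t - h)‖))]
      calc ‖(inner ℝ (B (f t)) (f t - f (t - h)) : ℝ)‖
          ≤ 2 * ‖B‖ * ‖f t‖ ^ 2 + ‖B‖ * ‖f (t - h)‖ ^ 2 := key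
        _ ≤ ‖2 * ‖B‖ * ‖f t‖ ^ 2 + ‖B‖ * ‖f (t - h)‖ ^ 2‖ := le_abs_self _
  -- pointwise inequality and integral_mono
  have hmono : (∫ t in (0:ℝ)..s, ((1/2 : ℝ) * g t - (1/2 : ℝ) * g (t - h))) ≤
      ∫ t in (0:ℝ)..s, (inner ℝ (B (f t)) (f t - f (t - h)) : ℝ) := by
    apply intervalIntegral.integral_mono_on hs.le
      (((hgi 0 s).const_mul (1/2 : ℝ)).sub ((hgsh 0 s).const_mul (1/2 : ℝ))) hFi
    intro t _
    set a := f t; set b := f (t - h)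
    have expand : (inner ℝ (B a) (a - b) : ℝ) =
        (1/2 : ℝ) * (inner ℝ (B a) a : ℝ) - (1/2 : ℝ) * (inner ℝ (B b) b : ℝ)
          + (1/2 : ℝ) * (inner ℝ (B (a - b)) (a - b) : ℝ) := by
      have h1 : (inner ℝ (B (a - b)) (a - b) : ℝ) =
          (inner ℝ (B a) a : ℝ) - (inner ℝ (B a) b : ℝ) - (inner ℝ (B b) a : ℝ)
            + (inner ℝ (B b) b : ℝ) := by
        simp [map_sub, inner_sub_left, inner_sub_right]; ring
      have h2 : (inner ℝ (B b) a : ℝ) = (inner ℝ (B a) b : ℝ) := by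
        rw [hsa b a, real_inner_comm]
      have h3 : (inner ℝ (B a) (a - b) : ℝ) = (inner ℝ (B a) a : ℝ) - (inner ℝ (B a) b : ℝ) :=
        inner_sub_right _ _ _
      rw [h3, h1, h2]; ring
    have := hpos (a - b)
    simp only [hg]
    rw [expand]
    linarith
  -- rewrite LHS integral
  have hshift : (∫ t in (0:ℝ)..s, g (t - h)) = ∫ t in (-h)..(s - h), g t := by
    rw [intervalIntegral.integral_comp_sub_right g h]
    norm_num
  have split1 : (∫ t in (0:ℝ)..(s-h), g t) + (∫ t in (s-h)..s, g t) = ∫ t in (0:ℝ)..s, g t :=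
    intervalIntegral.integral_add_adjacent_intervals (hgi _ _) (hgi _ _)
  have split2 : (∫ t in (-h)..(0:ℝ), g t) + (∫ t in (0:ℝ)..(s-h), g t)
      = ∫ t in (-h)..(s-h), g t :=
    intervalIntegral.integral_add_adjacent_intervals (hgi _ _) (hgi _ _)
  have hLHS : (∫ t in (0:ℝ)..s, ((1/2 : ℝ) * g t - (1/2 : ℝ) * g (t - h)))
      = (1/2 : ℝ) * (∫ t in (s-h)..s, g t) - (1/2 : ℝ) * (∫ t in (-h)..(0:ℝ), g t) := by
    rw [intervalIntegral.integral_sub ((hgi 0 s).const_mul (1/2 : ℝ))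
      ((hgsh 0 s).const_mul (1/2 : ℝ)), intervalIntegral.integral_const_mul,
      intervalIntegral.integral_const_mul]
    rw [hshift]
    linarith
  calc (1 / 2 : ℝ) * (∫ t in (s - h)..s, g t) - (1 / 2 : ℝ) * (∫ t in (-h)..(0:ℝ), g t)
      = ∫ t in (0:ℝ)..s, ((1/2 : ℝ) * g t - (1/2 : ℝ) * g (t - h)) := hLHS.symm
    _ ≤ _ := hmono
end
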